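/- For integers $m \geq 1$ and $u \in \{0, \dots, m-1\}$, we have $\sum_{\beta \in \mathbb{Q}^*(2^m)} \|2^{u}\beta\|^2 = \frac{2^{2m} + 2^{2u+1}}{3 \cdot 2^{m+2}}$. -/

import Mathlib

open Finset

/-- Distance to the nearest integer. -/
noncomputable def dnn (x : ℝ) : ℝ := |x - round x|

/-- Real value of a bit. -/
def bitr (b : Bool) : ℝ := if b then 1 else 0

/-- First coordinate of a Hammersley point: t_m/2 + ... + t_1/2^m. -/
noncomputable def hamX (m : ℕ) (t : Fin m → Bool) : ℝ :=
  ∑ j : Fin m, bitr (t j) / 2 ^ (m - j.val)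

/-- Second coordinate of a shifted Hammersley point: s_1/2 + ... + s_m/2^m with s_j = t_j ⊕ σ_j. -/
noncomputable def hamY (m : ℕ) (σ t : Fin m → Bool) : ℝ :=
  ∑ j : Fin m, bitr (xor (t j) (σ j)) / 2 ^ (j.val + 1)

/-- Local discrepancy of the shifted Hammersley point set H_m(σ). -/
noncomputable def Δham (m : ℕ) (σ : Fin m → Bool) (α β : ℝ) : ℝ :=
  ((Finset.univ.filter (fun t : Fin m → Bool => hamX m t < α ∧ hamY m σ t < β)).card : ℝ)
    - 2 ^ m * α * β

/-- digit i (1-based) of an m-digit vector, with value false outside 1..m. -/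
def dig (m : ℕ) (a : Fin m → Bool) (i : ℕ) : Bool :=
  if h : 1 ≤ i ∧ i ≤ m then a ⟨i - 1, by omega⟩ else false

/-- The m-bit real number with binary digits a: ∑ a_j 2^{-j}. -/
noncomputable def mval (m : ℕ) (a : Fin m → Bool) : ℝ :=
  ∑ j : Fin m, bitr (a j) / 2 ^ (j.val + 1)

/-- The index function j(u) associated with digits a of α, digits b of β, and shift τ. -/
def jfun (m : ℕ) (a b τ : Fin m → Bool) (u : ℕ) : ℕ :=
  Nat.findGreatest (fun j => dig m a (m + 1 - j) ≠ xor (dig m b j) (dig m τ j)) u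

/-- Smallest m-bit number ≥ α. -/
noncomputable def upm (m : ℕ) (α : ℝ) : ℝ := (⌈2 ^ m * α⌉ : ℝ) / 2 ^ m

/-- Local discrepancy of the symmetrized Hammersley point set H_m(σ) ∪ H_m(σ*) (multiset union). -/
noncomputable def Δsym (m : ℕ) (σ : Fin m → Bool) (α β : ℝ) : ℝ :=
  (((Finset.univ.filter (fun t : Fin m → Bool => hamX m t < α ∧ hamY m σ t < β)).card : ℝ)
    + ((Finset.univ.filter (fun t : Fin m → Bool =>
        hamX m t < α ∧ hamY m (fun j => !(σ j)) t < β)).card : ℝ))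
    - 2 ^ (m + 1) * α * β

lemma sumsq (M : ℕ) : ∑ i ∈ Finset.range M, (i:ℝ)^2 = M*(M-1)*(2*M-1)/6 := by
  induction M with
  | zero => simp
  | succ n ih => rw [Finset.sum_range_succ, ih]; push_cast; ring

lemma sumlin (M : ℕ) : ∑ i ∈ Finset.range M, (i:ℝ) = M*(M-1)/2 := by
  induction M with
  | zero => simp
  | succ n ih => rw [Finset.sum_range_succ, ih]; push_cast; ring

lemma per_sum (g : ℕ → ℝ) (N c : ℕ) :
    ∑ k ∈ Finset.range (c*N), g (k % N) = c * ∑ j ∈ Finset.range N, g (j % N) := by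
  induction c with
  | zero => simp
  | succ c ih =>
    rw [add_mul, one_mul, Finset.sum_range_add, ih]
    have : ∀ i ∈ Finset.range N, g ((c*N + i) % N) = g (i % N) := by
      intro i _
      congr 1
      rw [Nat.add_comm]
      exact Nat.add_mul_mod_self_right i c N
    rw [Finset.sum_congr rfl this]
    push_cast
    ring

theorem stmt1 (m : ℕ) (hm : 1 ≤ m) (u : ℕ) (hu : u ≤ m - 1) :
    ∑ k ∈ Finset.Ioo (0:ℕ) (2 ^ m), dnn (2 ^ u * ((k : ℝ) / 2 ^ m)) ^ 2
      = ((2 : ℝ) ^ (2 * m) + 2 ^ (2 * u + 1)) / (3 * 2 ^ (m + 2)) := by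
  obtain ⟨v, rfl⟩ : ∃ v, m = u + v + 1 := ⟨m - u - 1, by omega⟩
  set N : ℕ := 2 ^ (v+1) with hN
  -- convert Ioo sum to range sum
  have hpow : 0 < (2:ℕ)^(u+v+1) := Nat.pow_pos (by norm_num)
  have hins : Finset.range (2^(u+v+1)) = insert 0 (Finset.Ioo 0 (2^(u+v+1))) := by
    ext k; simp only [Finset.mem_range, Finset.mem_insert, Finset.mem_Ioo]; omega
  have h0 : dnn (2 ^ u * ((0:ℕ) / 2 ^ (u+v+1))) ^ 2 = 0 := by
    simp [dnn]
  have hIoo : ∑ k ∈ Finset.Ioo (0:ℕ) (2 ^ (u+v+1)), dnn (2 ^ u * ((k : ℝ) / 2 ^ (u+v+1))) ^ 2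
      = ∑ k ∈ Finset.range (2^(u+v+1)), dnn (2 ^ u * ((k : ℝ) / 2 ^ (u+v+1))) ^ 2 := by
    rw [hins, Finset.sum_insert (by simp)]
    simp [dnn]
  rw [hIoo]
  -- rewrite each term via abs_sub_round_div_natCast_eq
  have hterm : ∀ k : ℕ, dnn (2 ^ u * ((k : ℝ) / 2 ^ (u+v+1)))^2
      = ((min (k % N) (N - k % N) : ℕ) : ℝ)^2 / (N:ℝ)^2 := by
    intro k
    have h1 : (2:ℝ) ^ u * ((k : ℝ) / 2 ^ (u+v+1)) = (k : ℝ) / (N:ℝ) := by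
      rw [hN]
      push_cast
      rw [show u + v + 1 = u + (v+1) from rfl, pow_add]
      field_simp
    rw [h1, dnn, abs_sub_round_div_natCast_eq, div_pow]
  simp_rw [hterm]
  rw [← Finset.sum_div]
  have hsplit : (2:ℕ)^(u+v+1) = 2^u * N := by rw [hN]; ring
  rw [hsplit, per_sum (fun j => ((min j (N - j) : ℕ):ℝ)^2) N (2^u)]
  -- inner sum
  set M : ℕ := 2 ^ v with hM
  have hNM : N = M + M := by rw [hN, hM]; ring
  have hMpos : 0 < M := Nat.pow_pos (by norm_num)
  have hinner : ∑ j ∈ Finset.range N, ((min (j % N) (N - j % N) : ℕ):ℝ)^2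
      = (M:ℝ) * (2*(M:ℝ)^2 + 1) / 3 := by
    have hmod : ∀ j ∈ Finset.range N, ((min (j % N) (N - j % N) : ℕ):ℝ)^2
        = ((min j (N - j) : ℕ):ℝ)^2 := by
      intro j hj
      rw [Finset.mem_range] at hj
      rw [Nat.mod_eq_of_lt hj]
    rw [Finset.sum_congr rfl hmod, hNM, Finset.sum_range_add]
    have hA : ∀ j ∈ Finset.range M, ((min j (M + M - j) : ℕ):ℝ)^2 = (j:ℝ)^2 := by
      intro j hj
      rw [Finset.mem_range] at hj
      congr 2
      omega
    have hB : ∀ i ∈ Finset.range M, ((min (M + i) (M + M - (M + i)) : ℕ):ℝ)^2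
        = ((M:ℝ) - i)^2 := by
      intro i hi
      rw [Finset.mem_range] at hi
      have : min (M + i) (M + M - (M + i)) = M - i := by omega
      rw [this, Nat.cast_sub (by omega)]
    rw [Finset.sum_congr rfl hA, Finset.sum_congr rfl hB]
    have hexp : ∀ i ∈ Finset.range M, ((M:ℝ) - i)^2 = (M:ℝ)^2 - 2*M*i + (i:ℝ)^2 := by
      intro i _; ring
    rw [Finset.sum_congr rfl hexp, Finset.sum_add_distrib, Finset.sum_sub_distrib,
      Finset.sum_const, ← Finset.mul_sum, sumsq, sumlin, Finset.card_range]
    push_cast [hM]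
    ring
  rw [hinner]
  -- final arithmetic
  have hNr : (N:ℝ) = 2 * (M:ℝ) := by rw [hNM]; push_cast; ring
  have hMr : (M:ℝ) = 2^v := by rw [hM]; push_cast; ring
  have hMpos' : (0:ℝ) < 2^v := by positivity
  rw [hNr, hMr]
  have e1 : (2:ℝ)^(2*(u+v+1)) = (2^u)^2*(2^v)^2*4 := by
    rw [show 2*(u+v+1) = u+u+(v+v)+2 by ring, pow_add, pow_add, pow_add]; ring
  have e2 : (2:ℝ)^(2*u+1) = (2^u)^2*2 := by
    rw [show 2*u+1 = u+u+1 by ring, pow_add, pow_add]; ring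
  have e3 : (2:ℝ)^(u+v+1+2) = 2^u*2^v*8 := by
    rw [pow_add, pow_add, pow_add]; ring
  rw [e1, e2, e3]
  have hu2 : (0:ℝ) < 2^u := by positivity
  field_simp
  push_cast
  ring
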